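/- arXiv:hep-th/9501138 — 3 statements merged into one kernel-verified Lean document; each statement's English description precedes it below -/
import Mathlib

section
/- The scattering matrix S satisfies the unitarity relation: for all ζ ∈ ℂ∖{0} such that all the infinite-product denominators occurring in S₀(ζ) and S₀(ζ⁻¹) are nonzero and 1 − ζ²q² ≠ 0 and 1 − ζ⁻²q² ≠ 0, one has S₁₂(ζ) S₂₁(ζ⁻¹) = id on V ⊗ V, where S₂₁(ζ) := P S(ζ) P. In particular R(ζ)·(P R(ζ⁻¹) P) = id. -/
noncomputable section

open scoped BigOperators

/-- The infinite q-Pochhammer symbol `(a; p)_∞ = ∏_{k ≥ 0} (1 - a pᵏ)`. -/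
def qPoch (a p : ℂ) : ℂ := ∏' k : ℕ, (1 - a * p ^ k)

/-- The double infinite q-Pochhammer symbol `(a; p, p)_∞ = ∏_{k,l ≥ 0} (1 - a p^{k+l})`. -/
def qPoch2 (a p : ℂ) : ℂ := ∏' kl : ℕ × ℕ, (1 - a * p ^ (kl.1 + kl.2))

/-- `θ(z|p) = (z;p)_∞ (p/z;p)_∞`. -/
def theta (z p : ℂ) : ℂ := qPoch z p * qPoch (p / z) p

/-- `t(ζ) = ζ⁻¹ θ(qζ²|q⁴)/θ(qζ⁻²|q⁴)`. -/
def tfun (q ζ : ℂ) : ℂ := ζ⁻¹ * theta (q * ζ ^ 2) (q ^ 4) / theta (q * (ζ ^ 2)⁻¹) (q ^ 4)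

/-- `b(ζ) = (1-ζ²)q/(1-ζ²q²)`. -/
def Rb (q ζ : ℂ) : ℂ := (1 - ζ ^ 2) * q / (1 - ζ ^ 2 * q ^ 2)

/-- `c(ζ) = (1-q²)ζ/(1-ζ²q²)`. -/
def Rc (q ζ : ℂ) : ℂ := (1 - q ^ 2) * ζ / (1 - ζ ^ 2 * q ^ 2)

/-- The six-vertex R-matrix; the index `0 : Fin 2` encodes `+` and `1 : Fin 2` encodes `−`.
Rows are the upper (outgoing) indices, columns the lower (incoming) indices. -/
def Rmat (q ζ : ℂ) : Matrix (Fin 2 × Fin 2) (Fin 2 × Fin 2) ℂ :=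
  Matrix.of fun e f =>
    if e.1 = e.2 then (if f = e then 1 else 0)
    else if f = e then Rb q ζ
    else if f = (e.2, e.1) then Rc q ζ
    else 0

/-- The transposition `P(x⊗y) = y⊗x` on `V ⊗ V`. -/
def Pmat : Matrix (Fin 2 × Fin 2) (Fin 2 × Fin 2) ℂ :=
  Matrix.of fun e f => if f = (e.2, e.1) then 1 else 0

/-- The scalar factor `S₀(ζ)` with `z = ζ²`. -/
def S0 (q ζ : ℂ) : ℂ :=
  ζ * qPoch (ζ ^ 2)⁻¹ (q ^ 4) * qPoch (ζ ^ 2 * q ^ 2) (q ^ 4) /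
    (qPoch (ζ ^ 2) (q ^ 4) * qPoch ((ζ ^ 2)⁻¹ * q ^ 2) (q ^ 4))

/-- The scattering matrix `S(ζ) = S₀(ζ) R(ζ)`. -/
def Smat (q ζ : ℂ) : Matrix (Fin 2 × Fin 2) (Fin 2 × Fin 2) ℂ := S0 q ζ • Rmat q ζ

/-- Admissibility of the argument of the S-matrix: all denominators occurring in
`S(ζ)` are nonzero. -/
def Sdef (q ζ : ℂ) : Prop :=
  ζ ≠ 0 ∧ 1 - ζ ^ 2 * q ^ 2 ≠ 0 ∧ qPoch (ζ ^ 2) (q ^ 4) ≠ 0 ∧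
    qPoch ((ζ ^ 2)⁻¹ * q ^ 2) (q ^ 4) ≠ 0

/-- Kronecker (tensor) product of two operators on `V`. -/
def kron (A B : Matrix (Fin 2) (Fin 2) ℂ) : Matrix (Fin 2 × Fin 2) (Fin 2 × Fin 2) ℂ :=
  Matrix.of fun e f => A e.1 f.1 * B e.2 f.2

/-- `D = diag(δ, δ⁻¹)`. -/
def Dmat (δ : ℂ) : Matrix (Fin 2) (Fin 2) ℂ :=
  Matrix.of fun i j => if i = j then (if i = 0 then δ else δ⁻¹) else 0

/-- `D̄ = diag(δ, −δ⁻¹)`. -/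
def Dbar (δ : ℂ) : Matrix (Fin 2) (Fin 2) ℂ :=
  Matrix.of fun i j => if i = j then (if i = 0 then δ else -δ⁻¹) else 0

/-- The operator on `V^{⊗N}` acting as `M` on the `(j,k)`-th tensor factors and as the
identity elsewhere.  A vector of `V^{⊗N}` is encoded by its coordinates
`(Fin N → Fin 2) → ℂ` in the basis `v_{ε₁} ⊗ ⋯ ⊗ v_{ε_N}`. -/
def embed2 {N : ℕ} (M : Matrix (Fin 2 × Fin 2) (Fin 2 × Fin 2) ℂ) (j k : Fin N) :
    Matrix (Fin N → Fin 2) (Fin N → Fin 2) ℂ :=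
  Matrix.of fun a b =>
    M (a j, a k) (b j, b k) *
      ∏ i : Fin N, (if i = j ∨ i = k then 1 else if a i = b i then 1 else 0)

/-- The operator on `V^{⊗N}` acting as `M` on the `j`-th tensor factor. -/
def embed1 {N : ℕ} (M : Matrix (Fin 2) (Fin 2) ℂ) (j : Fin N) :
    Matrix (Fin N → Fin 2) (Fin N → Fin 2) ℂ :=
  Matrix.of fun a b =>
    M (a j) (b j) * ∏ i : Fin N, (if i = j then 1 else if a i = b i then 1 else 0)

/-- Number of `−` signs (i.e. of indices equal to `1`) in a basis configuration. -/
def countMinus {N : ℕ} (a : Fin N → Fin 2) : ℕ :=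
  (Finset.univ.filter fun i => a i = 1).card

/-- Membership in the weight subspace `V^{(n l)} ⊆ V^{⊗N}` (with `l = N - n`):
the coordinates vanish off configurations with exactly `n` minus signs. -/
def inVnl {N : ℕ} (n : ℕ) (v : (Fin N → Fin 2) → ℂ) : Prop :=
  ∀ a, countMinus a ≠ n → v a = 0

/-- The vector `w ⊗ u_σ ∈ V^{⊗N}`, where `w ∈ V^{⊗(N-2)}` occupies the slots `0,…,N-3`
and `u_σ = v₋⊗v₊ + σ v₊⊗v₋` occupies the slots `N-2, N-1`. -/
def tensU {N : ℕ} (hN : 2 ≤ N) (σ : ℂ) (w : (Fin (N - 2) → Fin 2) → ℂ) :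
    (Fin N → Fin 2) → ℂ :=
  fun a =>
    w (fun i => a ⟨i.1, by have := i.isLt; omega⟩) *
      (if a ⟨N - 2, by omega⟩ = 1 ∧ a ⟨N - 1, by omega⟩ = 0 then 1
       else if a ⟨N - 2, by omega⟩ = 0 ∧ a ⟨N - 1, by omega⟩ = 1 then σ else 0)

/-- `P₁₂ P₂₃ ⋯ P_{N−1,N}` on `V^{⊗N}` (1-based labels; 0-based sites `0,…,N-1`). -/
def Pchain (N : ℕ) : Matrix (Fin N → Fin 2) (Fin N → Fin 2) ℂ :=
  (List.ofFn fun t : Fin (N - 1) =>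
    embed2 Pmat ⟨t.1, by have := t.isLt; omega⟩ ⟨t.1 + 1, by have := t.isLt; omega⟩).prod

/-- `S_{1,…,N−2|N−1}(ζ₁,…,ζ_{N−2}|w) = S_{1,N−1}(ζ₁/w) ⋯ S_{N−2,N−1}(ζ_{N−2}/w)`
(1-based labels; the `j`-th spectral parameter `ζ_j` is `ζ (j-1)`). -/
def SchainUp (q : ℂ) (N : ℕ) (ζ : ℕ → ℂ) (w : ℂ) :
    Matrix (Fin N → Fin 2) (Fin N → Fin 2) ℂ :=
  (List.ofFn fun t : Fin (N - 2) =>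
    embed2 (Smat q (ζ t.1 / w)) ⟨t.1, by have := t.isLt; omega⟩
      ⟨N - 2, by have := t.isLt; omega⟩).prod

/-- `S_{N−1|1,…,N−2}(w|ζ₁,…,ζ_{N−2}) = S_{N−1,N−2}(w/ζ_{N−2}) ⋯ S_{N−1,1}(w/ζ₁)`. -/
def SchainDown (q : ℂ) (N : ℕ) (ζ : ℕ → ℂ) (w : ℂ) :
    Matrix (Fin N → Fin 2) (Fin N → Fin 2) ℂ :=
  (List.ofFn fun t : Fin (N - 2) =>
    embed2 (Smat q (w / ζ (N - 3 - t.1))) ⟨N - 2, by have := t.isLt; omega⟩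
      ⟨N - 3 - t.1, by have := t.isLt; omega⟩).prod

/-- `R_{N−1|1,…,N−2}(w|ζ₁,…,ζ_{N−2}) = R_{N−1,N−2}(w/ζ_{N−2}) ⋯ R_{N−1,1}(w/ζ₁)`. -/
def RchainDown (q : ℂ) (N : ℕ) (ζ : ℕ → ℂ) (w : ℂ) :
    Matrix (Fin N → Fin 2) (Fin N → Fin 2) ℂ :=
  (List.ofFn fun t : Fin (N - 2) =>
    embed2 (Rmat q (w / ζ (N - 3 - t.1))) ⟨N - 2, by have := t.isLt; omega⟩
      ⟨N - 3 - t.1, by have := t.isLt; omega⟩).prod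

/-- `R_{1,…,M−1|M}(ζ₁,…,ζ_{M−1}|w) = R_{1,M}(ζ₁/w) ⋯ R_{M−1,M}(ζ_{M−1}/w)` on `V^{⊗M}`. -/
def RchainUp (q : ℂ) (M : ℕ) (ζ : ℕ → ℂ) (w : ℂ) :
    Matrix (Fin M → Fin 2) (Fin M → Fin 2) ℂ :=
  (List.ofFn fun t : Fin (M - 1) =>
    embed2 (Rmat q (ζ t.1 / w)) ⟨t.1, by have := t.isLt; omega⟩
      ⟨M - 1, by have := t.isLt; omega⟩).prod

/-- The action of `Δ^{(M-1)}(f₀)` on the tensor product of evaluation representations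
with parameters `ζ 0, …, ζ (M-1)`:
`π(f₀) = Σ_j 1^{⊗j} ⊗ π_{ζ_j}(f₀) ⊗ π(t₀⁻¹) ⊗ ⋯ ⊗ π(t₀⁻¹)`, where
`π_ζ(f₀)v₊ = 0`, `π_ζ(f₀)v₋ = ζ⁻¹v₊`, `π_ζ(t₀⁻¹)v₊ = q v₊`, `π_ζ(t₀⁻¹)v₋ = q⁻¹ v₋`. -/
def f0op (q : ℂ) (M : ℕ) (ζ : ℕ → ℂ) : Matrix (Fin M → Fin 2) (Fin M → Fin 2) ℂ :=
  ∑ j : Fin M, Matrix.of fun a b =>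
    (if a j = 0 ∧ b j = 1 then (ζ j.1)⁻¹ else 0) *
      ∏ i : Fin M,
        (if i < j then (if a i = b i then 1 else 0)
         else if j < i then (if a i = b i then (if b i = 0 then q else q⁻¹) else 0)
         else 1)

/-- `M = tr_{N−1}( D̄_{N−1} R_{1,…,N−2|N−1}(ζ₁,…,ζ_{N−2}|ζ_{N−1}) ) ∈ End(V^{⊗(N−2)})`:
partial trace over the last factor of `V^{⊗(N-1)}`. -/
def Mop (q δ : ℂ) (N : ℕ) (hN : 3 ≤ N) (ζ : ℕ → ℂ) :
    Matrix (Fin (N - 2) → Fin 2) (Fin (N - 2) → Fin 2) ℂ :=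
  Matrix.of fun a b => ∑ e : Fin 2,
    (embed1 (N := N - 1) (Dbar δ) ⟨N - 2, by omega⟩ * RchainUp q (N - 1) ζ (ζ (N - 2)))
      (fun i => if h : i.1 < N - 2 then a ⟨i.1, h⟩ else e)
      (fun i => if h : i.1 < N - 2 then b ⟨i.1, h⟩ else e)

/-- Unitarity of the scattering matrix: `S₁₂(ζ) S₂₁(ζ⁻¹) = 1` where
`S₂₁(ζ) = P S(ζ) P`; in particular `R(ζ) (P R(ζ⁻¹) P) = 1`. -/
lemma R_unit (q ζ : ℂ) (hζ : ζ ≠ 0)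
    (hr1 : 1 - ζ ^ 2 * q ^ 2 ≠ 0) (hr2 : 1 - (ζ⁻¹) ^ 2 * q ^ 2 ≠ 0) :
    Rmat q ζ * (Pmat * Rmat q ζ⁻¹ * Pmat) = 1 := by
  have hz2 : ζ ^ 2 ≠ 0 := pow_ne_zero _ hζ
  have hrep : 1 - ζ⁻¹ ^ 2 * q ^ 2 = (ζ ^ 2 - q ^ 2) / ζ ^ 2 := by
    rw [inv_pow]; field_simp
  have hD : ζ ^ 2 - q ^ 2 ≠ 0 := by
    intro h
    exact hr2 (by rw [hrep, h, zero_div])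
  have e1 : Rb q ζ⁻¹ = (ζ ^ 2 - 1) * q / (ζ ^ 2 - q ^ 2) := by
    rw [Rb, div_eq_div_iff hr2 hD]
    field_simp
    try ring
  have e2 : Rc q ζ⁻¹ = (1 - q ^ 2) * ζ / (ζ ^ 2 - q ^ 2) := by
    rw [Rc, div_eq_div_iff hr2 hD]
    field_simp
    try ring
  have hbc : Rb q ζ * Rb q ζ⁻¹ + Rc q ζ * Rc q ζ⁻¹ = 1 := by
    rw [e1, e2, Rb, Rc]
    field_simp
    try ring
  have hcb : Rb q ζ * Rc q ζ⁻¹ + Rc q ζ * Rb q ζ⁻¹ = 0 := by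
    rw [e1, e2, Rb, Rc]
    field_simp
    try ring
  ext ⟨a, b⟩ ⟨c, d⟩
  simp only [Matrix.mul_apply, Fintype.sum_prod_type, Fin.sum_univ_two, Rmat, Pmat,
    Matrix.of_apply, Matrix.one_apply, Prod.mk.injEq]
  fin_cases a <;> fin_cases b <;> fin_cases c <;> fin_cases d <;>
    norm_num <;>
    first
    | linear_combination hbc
    | linear_combination hcb


/-- main -/
theorem S_unitarity (q : ℂ) (hq0 : 0 < ‖q‖) (hq1 : ‖q‖ < 1)
    (ζ : ℂ) (hζ : ζ ≠ 0)
    (hd1 : qPoch (ζ ^ 2) (q ^ 4) ≠ 0)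
    (hd2 : qPoch ((ζ ^ 2)⁻¹ * q ^ 2) (q ^ 4) ≠ 0)
    (hd3 : qPoch ((ζ⁻¹) ^ 2) (q ^ 4) ≠ 0)
    (hd4 : qPoch (((ζ⁻¹) ^ 2)⁻¹ * q ^ 2) (q ^ 4) ≠ 0)
    (hr1 : 1 - ζ ^ 2 * q ^ 2 ≠ 0) (hr2 : 1 - (ζ⁻¹) ^ 2 * q ^ 2 ≠ 0) :
    Smat q ζ * (Pmat * Smat q ζ⁻¹ * Pmat) = 1 ∧
      Rmat q ζ * (Pmat * Rmat q ζ⁻¹ * Pmat) = 1 := by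

  have hR := R_unit q ζ hζ hr1 hr2
  constructor
  · have hS0 : S0 q ζ * S0 q ζ⁻¹ = 1 := by
      have h1 : ((ζ⁻¹) ^ 2) = (ζ ^ 2)⁻¹ := by rw [inv_pow]
      have h2 : (((ζ⁻¹) ^ 2)⁻¹ * q ^ 2) = ζ ^ 2 * q ^ 2 := by rw [h1, inv_inv]
      rw [h1] at hd3; rw [h2] at hd4
      have hrw : S0 q ζ⁻¹ = ζ⁻¹ * qPoch (ζ ^ 2) (q ^ 4) * qPoch ((ζ ^ 2)⁻¹ * q ^ 2) (q ^ 4) /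
          (qPoch ((ζ ^ 2)⁻¹) (q ^ 4) * qPoch (ζ ^ 2 * q ^ 2) (q ^ 4)) := by
        simp only [S0, h1, inv_inv]
      rw [S0, hrw, div_mul_div_comm,
        div_eq_one_iff_eq (mul_ne_zero (mul_ne_zero hd1 hd2) (mul_ne_zero hd3 hd4))]
      field_simp
      try ring
    calc Smat q ζ * (Pmat * Smat q ζ⁻¹ * Pmat)
        = (S0 q ζ * S0 q ζ⁻¹) • (Rmat q ζ * (Pmat * Rmat q ζ⁻¹ * Pmat)) := by
          simp only [Smat, Matrix.mul_smul, Matrix.smul_mul, smul_smul]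
          rw [mul_comm (S0 q ζ⁻¹)]
      _ = 1 := by rw [hS0, hR, one_smul]
  · exact hR
end
end

section
/- The function t(ζ) = ζ⁻¹ θ(qζ²|q⁴)/θ(qζ⁻²|q⁴) satisfies t(ζ) · t(−σqζ) = σ for every σ ∈ {+1,−1} and every ζ ∈ ℂ∖{0} such that the theta functions in the denominators are nonzero. -/
noncomputable section

open scoped BigOperators

lemma multipliable_qPoch (a p : ℂ) (hp : ‖p‖ < 1) :
    Multipliable (fun k : ℕ => 1 - a * p ^ k) := by
  by_cases hz : ∃ k, 1 - a * p ^ k = 0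
  · obtain ⟨k, hk⟩ := hz
    refine ⟨0, ?_⟩
    have h : ∀ᶠ s : Finset ℕ in Filter.atTop,
        (fun s : Finset ℕ => (0 : ℂ)) s = ∏ i ∈ s, (1 - a * p ^ i) := by
      filter_upwards [Filter.eventually_ge_atTop ({k} : Finset ℕ)] with s hs
      exact (Finset.prod_eq_zero (hs (Finset.mem_singleton_self k)) hk).symm
    exact (tendsto_const_nhds.congr' h)
  · push_neg at hz
    apply Complex.multipliable_of_summable_log
    have hgeo : Summable (fun k : ℕ => (3/2 : ℝ) * (‖a‖ * ‖p‖ ^ k)) :=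
      (((summable_geometric_of_lt_one (norm_nonneg _) hp).mul_left
        (‖a‖)).mul_left _)
    apply Summable.of_norm_bounded_eventually_nat hgeo
    have htend : Filter.Tendsto (fun k : ℕ => ‖a‖ * ‖p‖ ^ k)
        Filter.atTop (nhds 0) := by
      simpa using (tendsto_pow_atTop_nhds_zero_of_lt_one (norm_nonneg _)
        hp).const_mul (‖a‖)
    filter_upwards [htend.eventually (ge_mem_nhds (by norm_num : (0:ℝ) < 1/2))] with k hk
    have hnorm : ‖-(a * p ^ k)‖ ≤ 1/2 := by
      simpa [norm_mul, norm_pow] using hk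
    have := Complex.norm_log_one_add_half_le_self hnorm
    calc ‖Complex.log (1 - a * p ^ k)‖ = ‖Complex.log (1 + -(a * p ^ k))‖ := by
          rw [sub_eq_add_neg]
      _ ≤ 3/2 * ‖-(a * p ^ k)‖ := this
      _ = 3/2 * (‖a‖ * ‖p‖ ^ k) := by
          simp [norm_mul, norm_pow]

lemma qPoch_rec (a p : ℂ) (hp : ‖p‖ < 1) :
    qPoch a p = (1 - a) * qPoch (a * p) p := by
  have hm : Multipliable (fun k : ℕ => 1 - a * p ^ (k + 1)) :=
    (multipliable_qPoch (a * p) p hp).congr (fun k => by ring_nf)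
  unfold qPoch
  rw [tprod_eq_zero_mul' (f := fun k : ℕ => 1 - a * p ^ k) hm]
  simp only [pow_zero, mul_one]
  congr 1
  exact tprod_congr fun k => by ring

lemma theta_inv (z p : ℂ) (hz : z ≠ 0) (hp : p ≠ 0) : theta (p / z) p = theta z p := by
  unfold theta
  have h : p / (p / z) = z := by field_simp
  rw [h, mul_comm]

lemma theta_shift (z p : ℂ) (hz : z ≠ 0) (hp0 : p ≠ 0) (hp : ‖p‖ < 1) :
    theta (p * z) p = -z⁻¹ * theta z p := by
  unfold theta
  have h1 : qPoch z p = (1 - z) * qPoch (z * p) p := qPoch_rec z p hp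
  have h2 : qPoch (z⁻¹) p = (1 - z⁻¹) * qPoch (z⁻¹ * p) p := qPoch_rec z⁻¹ p hp
  have e1 : p / (p * z) = z⁻¹ := by field_simp
  have e2 : z * p = p * z := by ring
  have e3 : z⁻¹ * p = p / z := by field_simp
  rw [e1, h2, e3, h1, e2]
  have : (1 - z⁻¹) = -z⁻¹ * (1 - z) := by
    field_simp; ring
  rw [this]; ring

/-- `t(ζ) t(−σqζ) = σ` for `σ = ±1`, where
`t(ζ) = ζ⁻¹ θ(qζ²|q⁴)/θ(qζ⁻²|q⁴)`. -/
theorem tfun_relation (q : ℂ) (hq0 : 0 < ‖q‖) (hq1 : ‖q‖ < 1)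
    (σ : ℂ) (hσ : σ = 1 ∨ σ = -1) (ζ : ℂ) (hζ : ζ ≠ 0)
    (h1 : theta (q * (ζ ^ 2)⁻¹) (q ^ 4) ≠ 0)
    (h2 : theta (q * ((-σ * q * ζ) ^ 2)⁻¹) (q ^ 4) ≠ 0) :
    tfun q ζ * tfun q (-σ * q * ζ) = σ := by
  have hq : q ≠ 0 := by
    intro h; rw [h] at hq0; simp at hq0
  have hp1 : ‖q ^ 4‖ < 1 := by
    rw [norm_pow]
    exact pow_lt_one₀ (norm_nonneg _) hq1 (by norm_num)
  have hσ2 : σ ^ 2 = 1 := by rcases hσ with rfl | rfl <;> norm_num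
  have hσ0 : σ ≠ 0 := by rcases hσ with rfl | rfl <;> norm_num
  have hsq : (-σ * q * ζ) ^ 2 = q ^ 2 * ζ ^ 2 := by
    have : (-σ * q * ζ) ^ 2 = σ ^ 2 * (q ^ 2 * ζ ^ 2) := by ring
    rw [this, hσ2, one_mul]
  -- identity A : theta (q * (ζ^2)⁻¹) = theta (q^3 * ζ^2)
  have hA : theta (q * (ζ ^ 2)⁻¹) (q ^ 4) = theta (q ^ 3 * ζ ^ 2) (q ^ 4) := by
    have harg : q * (ζ ^ 2)⁻¹ = q ^ 4 / (q ^ 3 * ζ ^ 2) := by field_simp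
    rw [harg]
    exact theta_inv _ _ (mul_ne_zero (pow_ne_zero _ hq) (pow_ne_zero _ hζ)) (pow_ne_zero _ hq)
  -- identity B : theta (q * (q^2*ζ^2)⁻¹) = -(q*ζ^2)⁻¹ * theta (q*ζ^2)
  have hB : theta (q * (q ^ 2 * ζ ^ 2)⁻¹) (q ^ 4) = -(q * ζ ^ 2)⁻¹ * theta (q * ζ ^ 2) (q ^ 4) := by
    have harg : q * (q ^ 2 * ζ ^ 2)⁻¹ = q ^ 4 / (q ^ 4 * (q * ζ ^ 2)) := by
      field_simp
    have hz1 : q * ζ ^ 2 ≠ 0 := mul_ne_zero hq (pow_ne_zero _ hζ)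
    rw [harg, theta_inv _ _ (mul_ne_zero (pow_ne_zero _ hq) hz1) (pow_ne_zero _ hq),
      theta_shift _ _ hz1 (pow_ne_zero _ hq) hp1]
  -- nonvanishing
  have hY : theta (q ^ 3 * ζ ^ 2) (q ^ 4) ≠ 0 := hA ▸ h1
  have hX : theta (q * ζ ^ 2) (q ^ 4) ≠ 0 := by
    intro h
    apply h2
    rw [hsq, hB, h, mul_zero]
  unfold tfun
  rw [hsq, hA, hB]
  have harg2 : q * (q ^ 2 * ζ ^ 2) = q ^ 3 * ζ ^ 2 := by ring
  rw [harg2]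
  have key : ∀ X Y : ℂ, X ≠ 0 → Y ≠ 0 →
      ζ⁻¹ * X / Y * ((-σ * q * ζ)⁻¹ * Y / (-(q * ζ ^ 2)⁻¹ * X)) = σ := by
    intro X Y hX hY
    rcases hσ with rfl | rfl <;> field_simp <;> ring
  exact key _ _ hX hY
end
end

section
/- The q-KZ equation follows from the first two axioms: let N ≥ 2, let r : ℂ∖{0} → ℂ be any function, let δ ∈ ℂ∖{0}, D = diag(δ, δ⁻¹) ∈ End(V), and let G : (ℂ∖{0})^N → V^{⊗N} be a function such that, for all admissible arguments, (i) P_{j,j+1} G(…, ζ_{j+1}, ζ_j, …) = S_{j,j+1}(ζ_j/ζ_{j+1}) G(…, ζ_j, ζ_{j+1}, …) for every 1 ≤ j ≤ N−1, and (ii) P₁₂ ⋯ P_{N−1,N} G(ζ₂, …, ζ_N, ζ₁q⁻²) = r(ζ₁) D₁ G(ζ₁, …, ζ_N). Then for all admissible arguments, P_{N−1,N} G(ζ₁, …, ζ_{N−2}, ζ_{N−1}, ζ_N) = r(ζ_N q²) D_{N−1} S_{1,…,N−2|N−1}(ζ₁, …, ζ_{N−2} | ζ_N q²) G(ζ₁,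 …, ζ_{N−2}, ζ_N q², ζ_{N−1}). -/
noncomputable section

open scoped BigOperators

namespace QKZAux

variable {N : ℕ}

abbrev Mat (N : ℕ) := Matrix (Fin N → Fin 2) (Fin N → Fin 2) ℂ

/-- The permutation matrix on `V^{⊗N}`. -/
def permM (σ : Equiv.Perm (Fin N)) : Mat N :=
  Matrix.of fun a b => if b = fun i => a (σ i) then 1 else 0

lemma permM_mul (σ : Equiv.Perm (Fin N)) (X : Mat N) :
    permM σ * X = Matrix.of fun a b => X (fun i => a (σ i)) b := by
  ext a b
  simp [permM, Matrix.mul_apply, ite_mul]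

lemma mul_permM (σ : Equiv.Perm (Fin N)) (X : Mat N) :
    X * permM σ = Matrix.of fun a b => X a (fun i => b (σ.symm i)) := by
  ext a b
  have hiff : ∀ c : Fin N → Fin 2,
      (b = fun i => c (σ i)) ↔ (c = fun i => b (σ.symm i)) := by
    intro c
    constructor
    · intro h; funext i
      rw [h]; simp
    · intro h; funext i
      rw [h]; simp
  simp only [permM, Matrix.mul_apply, Matrix.of_apply, hiff, mul_ite, mul_one, mul_zero]
  simp

lemma permM_mulVec (σ : Equiv.Perm (Fin N)) (v : (Fin N → Fin 2) → ℂ) :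
    (permM σ).mulVec v = fun a => v (fun i => a (σ i)) := by
  funext a
  simp [permM, Matrix.mulVec, dotProduct, ite_mul]

lemma permM_mul_permM (σ τ : Equiv.Perm (Fin N)) :
    permM σ * permM τ = permM (τ.trans σ) := by
  rw [permM_mul]
  rfl

lemma permM_refl : permM (Equiv.refl (Fin N)) = 1 := by
  ext a b
  simp [permM, Matrix.one_apply, eq_comm]

lemma permM_mul_embed2 (σ : Equiv.Perm (Fin N)) (M : Matrix (Fin 2 × Fin 2) (Fin 2 × Fin 2) ℂ)
    (j k : Fin N) :
    permM σ * embed2 M j k = embed2 M (σ j) (σ k) * permM σ := by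
  rw [permM_mul, mul_permM]
  ext a b
  simp only [embed2, Matrix.of_apply, Equiv.symm_apply_apply]
  congr 1
  refine Fintype.prod_equiv σ _ _ ?_
  intro i
  simp only [Equiv.symm_apply_apply, EmbeddingLike.apply_eq_iff_eq]

lemma permM_mul_embed1 (σ : Equiv.Perm (Fin N)) (M : Matrix (Fin 2) (Fin 2) ℂ) (j : Fin N) :
    permM σ * embed1 M j = embed1 M (σ j) * permM σ := by
  rw [permM_mul, mul_permM]
  ext a b
  simp only [embed1, Matrix.of_apply, Equiv.symm_apply_apply]
  congr 1
  refine Fintype.prod_equiv σ _ _ ?_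
  intro i
  simp only [Equiv.symm_apply_apply, EmbeddingLike.apply_eq_iff_eq]

lemma embed2_Pmat_eq_permM (j k : Fin N) (hjk : j ≠ k) :
    embed2 Pmat j k = permM (Equiv.swap j k) := by
  ext a b
  simp only [embed2, Pmat, permM, Matrix.of_apply]
  by_cases hb : b = fun i => a (Equiv.swap j k i)
  · rw [if_pos hb]
    have hbj : b j = a k := by rw [hb]; simp
    have hbk : b k = a j := by rw [hb]; simp
    rw [if_pos (by rw [hbj, hbk])]
    rw [one_mul]
    apply Finset.prod_eq_one
    intro i _
    by_cases hi : i = j ∨ i = k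
    · rw [if_pos hi]
    · push_neg at hi
      rw [if_neg (by push_neg; exact hi)]
      have : b i = a i := by
        rw [hb]; simp [Equiv.swap_apply_of_ne_of_ne hi.1 hi.2]
      rw [if_pos this.symm]
  · rw [if_neg hb]
    by_cases hjk2 : (b j, b k) = (a k, a j)
    · rw [if_pos hjk2, one_mul]
      have hbj : b j = a k := congrArg Prod.fst hjk2
      have hbk : b k = a j := congrArg Prod.snd hjk2
      have : ∃ i, ¬(i = j ∨ i = k) ∧ b i ≠ a i := by
        by_contra h
        push_neg at h
        apply hb
        funext i
        by_cases hij : i = j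
        · subst hij; rw [hbj]; simp
        · by_cases hik : i = k
          · subst hik; rw [hbk]; simp
          · rw [Equiv.swap_apply_of_ne_of_ne hij hik]
            exact h i ⟨hij, hik⟩
      obtain ⟨i, hi, hne⟩ := this
      apply Finset.prod_eq_zero (Finset.mem_univ i)
      rw [if_neg hi, if_neg (fun h => hne h.symm)]
    · rw [if_neg hjk2, zero_mul]

lemma embed2_Pmat_sq (j k : Fin N) (hjk : j ≠ k) :
    embed2 Pmat j k * embed2 Pmat j k = 1 := by
  rw [embed2_Pmat_eq_permM j k hjk, permM_mul_permM, Equiv.swap_swap, permM_refl]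

lemma rev_prod_prod {α : Type*} [Monoid α] :
    ∀ l : List α, (∀ x ∈ l, x * x = 1) → l.reverse.prod * l.prod = 1 := by
  intro l
  induction l with
  | nil => simp
  | cons a t ih =>
    intro h
    have ha : a * a = 1 := h a (by simp)
    have ht := ih (fun x hx => h x (by simp [hx]))
    simp only [List.reverse_cons, List.prod_append, List.prod_cons, List.prod_nil, mul_one]
    calc t.reverse.prod * a * (a * t.prod)
        = t.reverse.prod * (a * a) * t.prod := by
          rw [mul_assoc, ← mul_assoc a a, ← mul_assoc]
      _ = t.reverse.prod * t.prod := by rw [ha, mul_one]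
      _ = 1 := ht

lemma intertwine_ofFn {α : Type*} [Monoid α] :
    ∀ (n : ℕ) (P : α) (f g : Fin n → α), (∀ i, P * f i = g i * P) →
      P * (List.ofFn f).prod = (List.ofFn g).prod * P := by
  intro n
  induction n with
  | zero => intro P f g _; simp
  | succ n ih =>
    intro P f g h
    rw [List.ofFn_succ, List.ofFn_succ, List.prod_cons, List.prod_cons,
      ← mul_assoc, h 0, mul_assoc, ih P _ _ (fun i => h i.succ), ← mul_assoc]

end QKZAux

open QKZAux

/-- The intermediate spectral-parameter sequences. -/
def etaQ (ζ : ℕ → ℂ) (w : ℂ) (k i : ℕ) : ℂ :=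
  if i < k then ζ i else if i = k then w else ζ (i - 1)

/-- Descending list of adjacent transpositions. -/
def PlistQ (N : ℕ) : ℕ → List (Mat N)
  | 0 => []
  | k+1 => (if h : k+1 < N then embed2 Pmat ⟨k, Nat.lt_of_succ_lt h⟩ ⟨k+1, h⟩ else 1) :: PlistQ N k
/-- The q-KZ equation follows from the S-matrix symmetry and the
deformed cyclicity.  A function `G` with values in `V^{⊗N}` is evaluated on the tuple
`(ζ 0, …, ζ (N-1))` of an arbitrary sequence `ζ : ℕ → ℂ`. -/
theorem qKZ_from_axioms (q : ℂ) (hq0 : 0 < ‖q‖) (hq1 : ‖q‖ < 1)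
    (N : ℕ) (hN : 2 ≤ N) (r : ℂ → ℂ) (δ : ℂ) (hδ : δ ≠ 0)
    (G : (Fin N → ℂ) → (Fin N → Fin 2) → ℂ)
    -- Axiom 1: S-matrix symmetry
    (hsym : ∀ (ζ : ℕ → ℂ) (j : ℕ) (hj : j + 1 < N), (∀ i < N, ζ i ≠ 0) →
      Sdef q (ζ j / ζ (j + 1)) →
      (embed2 Pmat ⟨j, by omega⟩ ⟨j + 1, hj⟩).mulVec
          (G fun i => if i.1 = j then ζ (j + 1) else if i.1 = j + 1 then ζ j else ζ i.1)
        = (embed2 (Smat q (ζ j / ζ (j + 1))) ⟨j, by omega⟩ ⟨j + 1, hj⟩).mulVec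
            (G fun i => ζ i.1))
    -- Axiom 2: deformed cyclicity
    (hcyc : ∀ ζ : ℕ → ℂ, (∀ i < N, ζ i ≠ 0) →
      (Pchain N).mulVec (G fun i => if i.1 = N - 1 then ζ 0 / q ^ 2 else ζ (i.1 + 1))
        = r (ζ 0) • (embed1 (Dmat δ) ⟨0, by omega⟩).mulVec (G fun i => ζ i.1)) :
    -- Conclusion: the q-KZ equation
    ∀ ζ : ℕ → ℂ, (∀ i < N, ζ i ≠ 0) →
      (∀ j < N - 2, Sdef q (ζ j / (ζ (N - 1) * q ^ 2))) →
      (embed2 Pmat ⟨N - 2, by omega⟩ ⟨N - 1, by omega⟩).mulVec (G fun i => ζ i.1)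
        = r (ζ (N - 1) * q ^ 2) •
            (embed1 (Dmat δ) ⟨N - 2, by omega⟩).mulVec
              ((SchainUp q N ζ (ζ (N - 1) * q ^ 2)).mulVec
                (G fun i => if i.1 = N - 2 then ζ (N - 1) * q ^ 2
                   else if i.1 = N - 1 then ζ (N - 2) else ζ i.1)) := by
  intro ζ hnz hS
  have hq : q ≠ 0 := by
    intro h; rw [h] at hq0; simp at hq0
  set w : ℂ := ζ (N - 1) * q ^ 2 with hw_def
  have hw : w ≠ 0 := mul_ne_zero (hnz (N - 1) (by omega)) (pow_ne_zero _ hq)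
  have hetanz : ∀ k, ∀ i < N, etaQ ζ w k i ≠ 0 := by
    intro k i hi
    unfold etaQ
    split_ifs with h1 h2
    · exact hnz i hi
    · exact hw
    · exact hnz (i - 1) (by omega)
  -- the moving-through claim
  have claim : ∀ k (hk : k ≤ N - 2),
      (PlistQ N k).prod.mulVec (G fun i => etaQ ζ w 0 i.1) =
        (List.ofFn fun t : Fin k =>
          embed2 (Smat q (ζ t.1 / w)) ⟨t.1, by have := t.isLt; omega⟩
            ⟨k, by omega⟩).prod.mulVec (G fun i => etaQ ζ w k i.1) := by
    intro k
    induction k with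
    | zero =>
      intro hk
      simp only [PlistQ, List.ofFn_zero, List.prod_nil]
    | succ k ih =>
      intro hk1
      have hk : k ≤ N - 2 := by omega
      have hkN : k + 1 < N := by omega
      have hkN' : k < N := by omega
      have hPl : PlistQ N (k + 1)
          = embed2 Pmat (⟨k, hkN'⟩ : Fin N) ⟨k + 1, hkN⟩ :: PlistQ N k := by
        rw [PlistQ, dif_pos hkN]
      have hne : (⟨k, hkN'⟩ : Fin N) ≠ ⟨k + 1, hkN⟩ := by
        simp [Fin.ext_iff]
      have hPperm : embed2 Pmat (⟨k, hkN'⟩ : Fin N) ⟨k + 1, hkN⟩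
          = permM (Equiv.swap ⟨k, hkN'⟩ ⟨k + 1, hkN⟩) := embed2_Pmat_eq_permM _ _ hne
      have hint : embed2 Pmat (⟨k, hkN'⟩ : Fin N) ⟨k + 1, hkN⟩ *
            (List.ofFn fun t : Fin k =>
              embed2 (Smat q (ζ t.1 / w)) ⟨t.1, by have := t.isLt; omega⟩ ⟨k, hkN'⟩).prod
          = (List.ofFn fun t : Fin k =>
              embed2 (Smat q (ζ t.1 / w)) ⟨t.1, by have := t.isLt; omega⟩ ⟨k + 1, hkN⟩).prod *
            embed2 Pmat (⟨k, hkN'⟩ : Fin N) ⟨k + 1, hkN⟩ := by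
        rw [hPperm]
        apply intertwine_ofFn
        intro t
        have h1 : Equiv.swap (⟨k, hkN'⟩ : Fin N) ⟨k + 1, hkN⟩
              ⟨t.1, by have := t.isLt; omega⟩ = ⟨t.1, by have := t.isLt; omega⟩ := by
          apply Equiv.swap_apply_of_ne_of_ne <;>
            (simp only [ne_eq, Fin.mk.injEq]; have := t.isLt; omega)
        have h2 : Equiv.swap (⟨k, hkN'⟩ : Fin N) ⟨k + 1, hkN⟩ ⟨k, hkN'⟩ = ⟨k + 1, hkN⟩ :=
          Equiv.swap_apply_left _ _
        rw [permM_mul_embed2, h1, h2]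
      have he1 : etaQ ζ w (k + 1) k = ζ k := by simp [etaQ]
      have he2 : etaQ ζ w (k + 1) (k + 1) = w := by simp [etaQ]
      have harg : (fun i : Fin N => if i.1 = k then etaQ ζ w (k + 1) (k + 1)
            else if i.1 = k + 1 then etaQ ζ w (k + 1) k else etaQ ζ w (k + 1) i.1)
          = fun i : Fin N => etaQ ζ w k i.1 := by
        funext i
        simp only [etaQ]
        split_ifs <;>
          first
          | rfl
          | omega
          | exact congrArg ζ (by omega)
          | (exfalso; omega)
      have hsymk := hsym (etaQ ζ w (k + 1)) k hkN (fun i hi => hetanz (k + 1) i hi)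
        (by rw [he1, he2]; exact hS k (by omega))
      rw [harg, he1, he2] at hsymk
      calc (PlistQ N (k + 1)).prod.mulVec (G fun i => etaQ ζ w 0 i.1)
          = (embed2 Pmat (⟨k, hkN'⟩ : Fin N) ⟨k + 1, hkN⟩).mulVec
              ((PlistQ N k).prod.mulVec (G fun i => etaQ ζ w 0 i.1)) := by
            rw [hPl, List.prod_cons, ← Matrix.mulVec_mulVec]
        _ = (embed2 Pmat (⟨k, hkN'⟩ : Fin N) ⟨k + 1, hkN⟩).mulVec
              ((List.ofFn fun t : Fin k =>
                embed2 (Smat q (ζ t.1 / w)) ⟨t.1, by have := t.isLt; omega⟩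
                  ⟨k, hkN'⟩).prod.mulVec (G fun i => etaQ ζ w k i.1)) := by
            rw [ih hk]
        _ = ((embed2 Pmat (⟨k, hkN'⟩ : Fin N) ⟨k + 1, hkN⟩ *
              (List.ofFn fun t : Fin k =>
                embed2 (Smat q (ζ t.1 / w)) ⟨t.1, by have := t.isLt; omega⟩
                  ⟨k, hkN'⟩).prod)).mulVec (G fun i => etaQ ζ w k i.1) := by
            rw [Matrix.mulVec_mulVec]
        _ = ((List.ofFn fun t : Fin k =>
              embed2 (Smat q (ζ t.1 / w)) ⟨t.1, by have := t.isLt; omega⟩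
                ⟨k + 1, hkN⟩).prod *
              embed2 Pmat (⟨k, hkN'⟩ : Fin N) ⟨k + 1, hkN⟩).mulVec
                (G fun i => etaQ ζ w k i.1) := by
            rw [hint]
        _ = (List.ofFn fun t : Fin k =>
              embed2 (Smat q (ζ t.1 / w)) ⟨t.1, by have := t.isLt; omega⟩
                ⟨k + 1, hkN⟩).prod.mulVec
              ((embed2 Pmat (⟨k, hkN'⟩ : Fin N) ⟨k + 1, hkN⟩).mulVec
                (G fun i => etaQ ζ w k i.1)) := by
            rw [← Matrix.mulVec_mulVec]
        _ = (List.ofFn fun t : Fin k =>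
              embed2 (Smat q (ζ t.1 / w)) ⟨t.1, by have := t.isLt; omega⟩
                ⟨k + 1, hkN⟩).prod.mulVec
              ((embed2 (Smat q (ζ k / w)) (⟨k, hkN'⟩ : Fin N) ⟨k + 1, hkN⟩).mulVec
                (G fun i => etaQ ζ w (k + 1) i.1)) := by
            rw [hsymk]
        _ = ((List.ofFn fun t : Fin k =>
              embed2 (Smat q (ζ t.1 / w)) ⟨t.1, by have := t.isLt; omega⟩
                ⟨k + 1, hkN⟩).prod *
              embed2 (Smat q (ζ k / w)) (⟨k, hkN'⟩ : Fin N) ⟨k + 1, hkN⟩).mulVec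
                (G fun i => etaQ ζ w (k + 1) i.1) := by
            rw [Matrix.mulVec_mulVec]
        _ = (List.ofFn fun t : Fin (k + 1) =>
              embed2 (Smat q (ζ t.1 / w)) ⟨t.1, by have := t.isLt; omega⟩
                ⟨k + 1, hkN⟩).prod.mulVec (G fun i => etaQ ζ w (k + 1) i.1) := by
            rw [List.ofFn_succ', List.prod_concat]
            rfl
  -- D commutation
  have hDcomm : ∀ k (hk : k < N),
      (PlistQ N k).prod * embed1 (Dmat δ) ⟨0, by omega⟩ =
        embed1 (Dmat δ) ⟨k, hk⟩ * (PlistQ N k).prod := by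
    intro k
    induction k with
    | zero => intro hk; simp [PlistQ]
    | succ k ih =>
      intro hk1
      have hk : k < N := by omega
      have hPl : PlistQ N (k + 1)
          = embed2 Pmat (⟨k, hk⟩ : Fin N) ⟨k + 1, hk1⟩ :: PlistQ N k := by
        rw [PlistQ, dif_pos hk1]
      have hne : (⟨k, hk⟩ : Fin N) ≠ ⟨k + 1, hk1⟩ := by simp [Fin.ext_iff]
      have hPD : embed2 Pmat (⟨k, hk⟩ : Fin N) ⟨k + 1, hk1⟩ * embed1 (Dmat δ) ⟨k, hk⟩
          = embed1 (Dmat δ) ⟨k + 1, hk1⟩ * embed2 Pmat (⟨k, hk⟩ : Fin N) ⟨k + 1, hk1⟩ := by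
        rw [embed2_Pmat_eq_permM _ _ hne, permM_mul_embed1, Equiv.swap_apply_left]
      rw [hPl, List.prod_cons, mul_assoc, ih hk, ← mul_assoc, hPD, mul_assoc]
  -- reversal identification
  have hPrev : ∀ k (hk : k ≤ N - 1),
      PlistQ N k = (List.ofFn fun t : Fin k =>
        embed2 Pmat (⟨t.1, by have := t.isLt; omega⟩ : Fin N)
          ⟨t.1 + 1, by have := t.isLt; omega⟩).reverse := by
    intro k
    induction k with
    | zero => intro _; simp [PlistQ]
    | succ k ih =>
      intro hk1
      have hk : k ≤ N - 1 := by omega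
      have hkN : k + 1 < N := by omega
      rw [List.ofFn_succ', List.concat_eq_append, List.reverse_append]
      have hcast : (List.ofFn fun t : Fin k =>
            embed2 Pmat (⟨(t.castSucc).1, by have := t.isLt; omega⟩ : Fin N)
              ⟨(t.castSucc).1 + 1, by have := t.isLt; omega⟩)
          = (List.ofFn fun t : Fin k =>
            embed2 Pmat (⟨t.1, by have := t.isLt; omega⟩ : Fin N)
              ⟨t.1 + 1, by have := t.isLt; omega⟩) := rfl
      rw [PlistQ, dif_pos hkN, ih hk]
      simp [hcast]
  have hinv : (PlistQ N (N - 1)).prod * Pchain N = 1 := by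
    rw [Pchain, hPrev (N - 1) le_rfl]
    apply rev_prod_prod
    intro x hx
    simp only [List.mem_ofFn] at hx
    obtain ⟨t, rfl⟩ := hx
    exact embed2_Pmat_sq _ _ (by simp [Fin.ext_iff])
  -- apply cyclicity
  have hA := hcyc (etaQ ζ w 0) (fun i hi => hetanz 0 i hi)
  have hargA : (fun i : Fin N =>
        if i.1 = N - 1 then etaQ ζ w 0 0 / q ^ 2 else etaQ ζ w 0 (i.1 + 1))
      = fun i : Fin N => ζ i.1 := by
    funext i
    by_cases hi : i.1 = N - 1
    · rw [if_pos hi]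
      have h0 : etaQ ζ w 0 0 = w := by simp [etaQ]
      rw [h0, hw_def, mul_div_cancel_right₀ _ (pow_ne_zero 2 hq)]
      exact congrArg ζ (by omega)
    · rw [if_neg hi]
      simp [etaQ]
  have h00 : etaQ ζ w 0 0 = w := by simp [etaQ]
  rw [hargA, h00] at hA
  have hG : (G fun i => ζ i.1) = (PlistQ N (N - 1)).prod.mulVec
      (r w • (embed1 (Dmat δ) ⟨0, by omega⟩).mulVec (G fun i => etaQ ζ w 0 i.1)) := by
    rw [← hA, Matrix.mulVec_mulVec, hinv, Matrix.one_mulVec]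
  have hNsub : N - 1 = (N - 2) + 1 := by omega
  have hit2 : (N - 2) + 1 < N := by omega
  have hN2 : N - 2 < N := by omega
  have hsplit : PlistQ N (N - 1)
      = embed2 Pmat (⟨N - 2, hN2⟩ : Fin N) ⟨(N - 2) + 1, hit2⟩ :: PlistQ N (N - 2) := by
    rw [hNsub, PlistQ, dif_pos hit2]
  have hidx : (⟨(N - 2) + 1, hit2⟩ : Fin N) = ⟨N - 1, by omega⟩ := by
    simp [Fin.ext_iff]; omega
  have hne2 : (⟨N - 2, hN2⟩ : Fin N) ≠ ⟨N - 1, by omega⟩ := by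
    simp [Fin.ext_iff]; omega
  rw [hidx] at hsplit
  have hvf : (fun i : Fin N => etaQ ζ w (N - 2) i.1)
      = fun i : Fin N => if i.1 = N - 2 then w
          else if i.1 = N - 1 then ζ (N - 2) else ζ i.1 := by
    funext i
    have hi := i.isLt
    simp only [etaQ]
    split_ifs <;>
      first
      | rfl
      | omega
      | exact congrArg ζ (by omega)
      | (exfalso; omega)
  calc (embed2 Pmat (⟨N - 2, hN2⟩ : Fin N) ⟨N - 1, by omega⟩).mulVec (G fun i => ζ i.1)
      = (embed2 Pmat (⟨N - 2, hN2⟩ : Fin N) ⟨N - 1, by omega⟩).mulVec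
          ((PlistQ N (N - 1)).prod.mulVec
            (r w • (embed1 (Dmat δ) ⟨0, by omega⟩).mulVec (G fun i => etaQ ζ w 0 i.1))) := by
        rw [← hG]
    _ = ((embed2 Pmat (⟨N - 2, hN2⟩ : Fin N) ⟨N - 1, by omega⟩ *
          (embed2 Pmat (⟨N - 2, hN2⟩ : Fin N) ⟨N - 1, by omega⟩ *
            (PlistQ N (N - 2)).prod))).mulVec
            (r w • (embed1 (Dmat δ) ⟨0, by omega⟩).mulVec (G fun i => etaQ ζ w 0 i.1)) := by
        rw [Matrix.mulVec_mulVec, hsplit, List.prod_cons]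
    _ = (PlistQ N (N - 2)).prod.mulVec
          (r w • (embed1 (Dmat δ) ⟨0, by omega⟩).mulVec (G fun i => etaQ ζ w 0 i.1)) := by
        rw [← mul_assoc, embed2_Pmat_sq _ _ hne2, one_mul]
    _ = r w • ((PlistQ N (N - 2)).prod *
          embed1 (Dmat δ) ⟨0, by omega⟩).mulVec (G fun i => etaQ ζ w 0 i.1) := by
        simp only [Matrix.mulVec_smul, Matrix.mulVec_mulVec]
    _ = r w • (embed1 (Dmat δ) ⟨N - 2, hN2⟩ *
          (PlistQ N (N - 2)).prod).mulVec (G fun i => etaQ ζ w 0 i.1) := by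
        rw [hDcomm (N - 2) hN2]
    _ = r w • (embed1 (Dmat δ) ⟨N - 2, hN2⟩).mulVec
          ((PlistQ N (N - 2)).prod.mulVec (G fun i => etaQ ζ w 0 i.1)) := by
        rw [← Matrix.mulVec_mulVec]
    _ = r w • (embed1 (Dmat δ) ⟨N - 2, hN2⟩).mulVec
          ((List.ofFn fun t : Fin (N - 2) =>
            embed2 (Smat q (ζ t.1 / w)) ⟨t.1, by have := t.isLt; omega⟩
              ⟨N - 2, hN2⟩).prod.mulVec (G fun i => etaQ ζ w (N - 2) i.1)) := by
        rw [claim (N - 2) le_rfl]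
    _ = r w • (embed1 (Dmat δ) ⟨N - 2, hN2⟩).mulVec
          ((SchainUp q N ζ w).mulVec
            (G fun i => if i.1 = N - 2 then w
              else if i.1 = N - 1 then ζ (N - 2) else ζ i.1)) := by
        rw [hvf]; rfl
end
end
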